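/- Let C ⊆ 𝔽₂ⁿ be a binary linear code. Then the set of roots of Γ_C, namely {x ∈ Γ_C : x•x = 2}, is finite with exactly 2n + 16·|{c ∈ C : wt(c) = 4}| elements, where |{c ∈ C : wt(c) = 4}| is the number of codewords of C of Hamming weight 4. -/

import Mathlib

open scoped BigOperators

/-- The lattice `Γ_C = (1/√2)·ρ⁻¹(C) ⊆ ℝⁿ` associated to a binary code `C ⊆ 𝔽₂ⁿ`,
where `ρ : ℤⁿ → 𝔽₂ⁿ` is componentwise reduction modulo `2`. -/
def codeLattice {n : ℕ} (C : Set (Fin n → ZMod 2)) : Set (Fin n → ℝ) :=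
  {x | ∃ z : Fin n → ℤ, (fun i => (z i : ZMod 2)) ∈ C ∧
      ∀ i, x i = (z i : ℝ) / Real.sqrt 2}

/-- The Hamming weight of a word in `𝔽₂ⁿ`. -/
def hammingWt {n : ℕ} (c : Fin n → ZMod 2) : ℕ :=
  (Finset.univ.filter fun i => c i ≠ 0).card

lemma sum_sq_eq_wt {n : ℕ} (z : Fin n → ℤ) (h : ∀ i, z i = 0 ∨ z i = 1 ∨ z i = -1) :
    ∑ i, (z i)^2 = (hammingWt (fun i => ((z i : ZMod 2))) : ℤ) := by
  rw [hammingWt, Finset.card_filter]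
  push_cast
  refine Finset.sum_congr rfl fun i _ => ?_
  rcases h i with h0 | h0 | h0 <;> simp [h0] <;> decide

/-- The set of roots of the lattice `Γ_C` is finite, of cardinality
`2n + 16·#{c ∈ C : wt(c) = 4}`. -/
theorem card_roots_codeLattice {n : ℕ}
    (C : Submodule (ZMod 2) (Fin n → ZMod 2)) :
    {x : Fin n → ℝ | x ∈ codeLattice (C : Set (Fin n → ZMod 2)) ∧
        ∑ i, x i * x i = 2}.Finite ∧
      {x : Fin n → ℝ | x ∈ codeLattice (C : Set (Fin n → ZMod 2)) ∧
        ∑ i, x i * x i = 2}.ncard =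
        2 * n + 16 * {c : Fin n → ZMod 2 | c ∈ C ∧ hammingWt c = 4}.ncard := by
  classical
  have h2 : Real.sqrt 2 * Real.sqrt 2 = 2 := Real.mul_self_sqrt (by norm_num)
  have hs2 : Real.sqrt 2 ≠ 0 := by positivity
  set f : (Fin n → ℤ) → (Fin n → ℝ) := fun z i => (z i : ℝ) / Real.sqrt 2 with hf
  set S : Finset (Fin n → ℤ) :=
    (Fintype.piFinset fun _ => Finset.Icc (-2:ℤ) 2).filter
      (fun z => ((fun i => ((z i : ZMod 2))) ∈ C ∧ ∑ i, (z i)^2 = 4)) with hSdef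
  have hsumf : ∀ z : Fin n → ℤ, ∑ i, f z i * f z i = ((∑ i, (z i)^2 : ℤ) : ℝ) / 2 := by
    intro z
    have ht : ∀ i : Fin n, f z i * f z i = ((z i : ℝ))^2 / 2 := fun i => by
      simp only [hf]; rw [div_mul_div_comm, h2]; ring
    rw [Finset.sum_congr rfl fun i _ => ht i, ← Finset.sum_div]
    push_cast
    ring
  have hfinj : Function.Injective f := by
    intro z w hzw
    funext i
    have h1 := congrFun hzw i
    simp only [hf] at h1
    field_simp at h1
    exact_mod_cast h1
  have hset : {x : Fin n → ℝ | x ∈ codeLattice (C : Set (Fin n → ZMod 2)) ∧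
      ∑ i, x i * x i = 2} = ↑(S.image f) := by
    ext x
    simp only [Set.mem_setOf_eq, Finset.coe_image, Set.mem_image, Finset.mem_coe]
    constructor
    · rintro ⟨⟨z, hzC, hzx⟩, hsum⟩
      have hxz : x = f z := funext hzx
      subst hxz
      rw [hsumf z] at hsum
      have hz4 : ∑ i, (z i)^2 = 4 := by
        have h4 : ((∑ i, (z i)^2 : ℤ) : ℝ) = 4 := by linarith
        exact_mod_cast h4
      refine ⟨z, ?_, rfl⟩
      rw [hSdef, Finset.mem_filter, Fintype.mem_piFinset]
      refine ⟨fun i => ?_, hzC, hz4⟩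
      have hle : (z i)^2 ≤ 4 :=
        le_trans (Finset.single_le_sum (fun j _ => sq_nonneg (z j)) (Finset.mem_univ i))
          (le_of_eq hz4)
      rw [Finset.mem_Icc]
      constructor <;> nlinarith [sq_nonneg (z i + 2), sq_nonneg (z i - 2)]
    · rintro ⟨z, hzS, rfl⟩
      rw [hSdef, Finset.mem_filter] at hzS
      obtain ⟨-, hzC, hz4⟩ := hzS
      refine ⟨⟨z, hzC, fun i => rfl⟩, ?_⟩
      rw [hsumf z, hz4]; norm_num
  set Wf : Finset (Fin n → ZMod 2) :=
    Finset.univ.filter (fun c => c ∈ C ∧ hammingWt c = 4) with hWf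
  have hWset : {c : Fin n → ZMod 2 | c ∈ C ∧ hammingWt c = 4} = ↑Wf := by
    ext c; simp [hWf]
  -- the splitting predicate
  set P : (Fin n → ℤ) → Prop := fun z => ∃ i, z i = 2 ∨ z i = -2 with hP
  have hsplit : (S.filter P).card + (S.filter fun z => ¬ P z).card = S.card :=
    Finset.card_filter_add_card_filter_not P
  -- count of the "±2" part
  have hA : (S.filter P).card = 2 * n := by
    set g : Fin n × ℤ → (Fin n → ℤ) := fun p j => if j = p.1 then p.2 else 0 with hg
    set T : Finset (Fin n × ℤ) := Finset.univ ×ˢ ({2,-2} : Finset ℤ) with hT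
    have himg : S.filter P = T.image g := by
      ext z
      simp only [Finset.mem_filter, Finset.mem_image, hT, Finset.mem_product, Finset.mem_univ,
        true_and, Finset.mem_insert, Finset.mem_singleton, hSdef, Fintype.mem_piFinset,
        Finset.mem_Icc, hP]
      constructor
      · rintro ⟨⟨hb, hzC, hz4⟩, i, hi⟩
        refine ⟨(i, z i), by rcases hi with h | h <;> simp [h], ?_⟩
        have hzi : (z i)^2 = 4 := by rcases hi with h | h <;> rw [h] <;> norm_num
        have hadd := Finset.add_sum_erase Finset.univ (fun j => (z j)^2) (Finset.mem_univ i)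
        have hrest : ∑ j ∈ Finset.univ.erase i, (z j)^2 = 0 := by omega
        funext j
        by_cases hj : j = i
        · simp [hg, hj]
        · have hj0 : (z j)^2 = 0 :=
            (Finset.sum_eq_zero_iff_of_nonneg (fun k _ => sq_nonneg (z k))).mp hrest j
              (Finset.mem_erase.mpr ⟨hj, Finset.mem_univ j⟩)
          have hzj : z j = 0 := by nlinarith [sq_nonneg (z j)]
          simp [hg, hj, hzj]
      · rintro ⟨⟨i, a⟩, ha, rfl⟩
        have ha' : a = 2 ∨ a = -2 := ha
        have ha0 : ((a : ZMod 2)) = 0 :=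
          (ZMod.intCast_zmod_eq_zero_iff_dvd a 2).mpr (by rcases ha with rfl | rfl <;> norm_num)
        clear ha
        refine ⟨⟨fun j => ?_, ?_, ?_⟩, ⟨i, ?_⟩⟩
        · by_cases hj : j = i <;> simp [hg, hj] <;> rcases ha' with rfl | rfl <;> norm_num
        · have hzero : (fun j => ((g (i, a) j : ZMod 2))) = (0 : Fin n → ZMod 2) := by
            funext j
            by_cases hj : j = i <;> simp [hg, hj, ha0]
          rw [hzero]; exact C.zero_mem
        · have hsingle : ∑ j, (g (i, a) j)^2 = (g (i, a) i)^2 :=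
            Finset.sum_eq_single i (fun j _ hj => by simp [hg, hj])
              (fun h => absurd (Finset.mem_univ i) h)
          rw [hsingle]
          rcases ha' with rfl | rfl <;> simp [hg]
        · simpa [hg] using ha'
    have hinj : Set.InjOn g ↑T := by
      intro p hp q hq hpq
      simp only [hT, Finset.coe_product, Set.mem_prod, Finset.coe_insert, Finset.coe_singleton,
        Set.mem_insert_iff, Set.mem_singleton_iff] at hp hq
      have hp2 : p.2 ≠ 0 := by rcases hp.2 with h | h <;> rw [h] <;> norm_num
      have h1 : p.2 = if p.1 = q.1 then q.2 else 0 := by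
        have := congrFun hpq p.1
        simpa [hg] using this
      by_cases h : p.1 = q.1
      · rw [if_pos h] at h1; exact Prod.ext h h1
      · rw [if_neg h] at h1; exact absurd h1 hp2
    rw [himg, Finset.card_image_of_injOn hinj, hT, Finset.card_product]
    have hc2 : ({2, -2} : Finset ℤ).card = 2 := by decide
    rw [hc2, Finset.card_univ, Fintype.card_fin]
    ring
  -- bounds on the "no ±2" part
  have hB1 : ∀ z ∈ S.filter (fun z => ¬ P z), ∀ i, z i = 0 ∨ z i = 1 ∨ z i = -1 := by
    intro z hz i
    rw [Finset.mem_filter, hSdef, Finset.mem_filter, Fintype.mem_piFinset] at hz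
    obtain ⟨⟨hb, -, -⟩, hnp⟩ := hz
    simp only [hP, not_exists, not_or] at hnp
    have hbi := hb i
    rw [Finset.mem_Icc] at hbi
    have h1 := (hnp i).1
    have h2' := (hnp i).2
    omega
  -- fibers of reduction mod 2
  have hfib : ∀ z ∈ S.filter (fun z => ¬ P z),
      (fun i => ((z i : ZMod 2))) ∈ Wf := by
    intro z hz
    have h01 := hB1 z hz
    rw [Finset.mem_filter, hSdef, Finset.mem_filter] at hz
    obtain ⟨⟨-, hzC, hz4⟩, -⟩ := hz
    rw [hWf, Finset.mem_filter]
    refine ⟨Finset.mem_univ _, hzC, ?_⟩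
    have hw := sum_sq_eq_wt z h01
    have h4 : ((hammingWt (fun i => ((z i : ZMod 2))) : ℕ) : ℤ) = 4 := by
      rw [← hw]; exact hz4
    exact_mod_cast h4
  have hBcard : (S.filter fun z => ¬ P z).card =
      ∑ c ∈ Wf, ((S.filter fun z => ¬ P z).filter
        (fun z => (fun i => ((z i : ZMod 2))) = c)).card :=
    Finset.card_eq_sum_card_fiberwise hfib
  have hfibc : ∀ c ∈ Wf, ((S.filter fun z => ¬ P z).filter
      (fun z => (fun i => ((z i : ZMod 2))) = c)).card = 16 := by
    intro c hc
    rw [hWf, Finset.mem_filter] at hc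
    obtain ⟨-, hcC, hc4⟩ := hc
    have hfeq : (S.filter fun z => ¬ P z).filter
        (fun z => (fun i => ((z i : ZMod 2))) = c) =
        Fintype.piFinset (fun i => if c i = 0 then ({0} : Finset ℤ) else ({1, -1} : Finset ℤ)) := by
      ext z
      constructor
      · intro hz
        rw [Finset.mem_filter] at hz
        obtain ⟨hzB, hρc⟩ := hz
        have h01 := hB1 z hzB
        rw [Fintype.mem_piFinset]
        intro i
        have hci : c i = ((z i : ZMod 2)) := (congrFun hρc i).symm
        by_cases h0 : z i = 0
        · have hc0 : c i = 0 := by rw [hci, h0]; simp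
          simp [hc0, h0]
        · have hne : c i ≠ 0 := by
            rw [hci]
            intro hzi0
            have hdvd := (ZMod.intCast_zmod_eq_zero_iff_dvd (z i) 2).mp hzi0
            rcases h01 i with h | h | h
            · exact h0 h
            · rw [h] at hdvd; norm_num at hdvd
            · rw [h] at hdvd; norm_num at hdvd
          rcases h01 i with h | h | h
          · exact absurd h h0
          · simp [hne, h]
          · simp [hne, h]
      · intro hz
        rw [Fintype.mem_piFinset] at hz
        have h01 : ∀ i, z i = 0 ∨ z i = 1 ∨ z i = -1 := by
          intro i
          have := hz i
          by_cases hci : c i = 0 <;> simp [hci] at this <;> tauto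
        have hzc : ∀ i, ((z i : ZMod 2)) = c i := by
          intro i
          have hi := hz i
          by_cases hci : c i = 0
          · rw [if_pos hci] at hi
            simp only [Finset.mem_singleton] at hi
            rw [hi, hci]; simp
          · rw [if_neg hci] at hi
            simp only [Finset.mem_insert, Finset.mem_singleton] at hi
            have hc1 : c i = 1 := (by decide : ∀ a : ZMod 2, a ≠ 0 → a = 1) _ hci
            rcases hi with h | h <;> rw [h, hc1] <;> decide
        have hfc : (fun i => ((z i : ZMod 2))) = c := funext hzc
        have hz4 : ∑ i, (z i)^2 = 4 := by
          have h4 : ((hammingWt c : ℕ) : ℤ) = 4 := by exact_mod_cast congrArg (Nat.cast (R := ℤ)) hc4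
          rw [sum_sq_eq_wt z h01, hfc, h4]
        rw [Finset.mem_filter, Finset.mem_filter, hSdef, Finset.mem_filter, Fintype.mem_piFinset]
        refine ⟨⟨⟨fun i => ?_, ?_, hz4⟩, ?_⟩, hfc⟩
        · exact Finset.mem_Icc.mpr (by rcases h01 i with h | h | h <;> rw [h] <;> norm_num)
        · rw [hfc]; exact hcC
        · simp only [hP]
          rintro ⟨i, hi⟩
          rcases h01 i with h | h | h <;> rcases hi with h2' | h2' <;> rw [h] at h2' <;>
            norm_num at h2'
    rw [hfeq, Fintype.card_piFinset]
    have hcard : ∀ i : Fin n,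
        ((if c i = 0 then ({0} : Finset ℤ) else ({1, -1} : Finset ℤ)).card)
          = if c i = 0 then 1 else 2 := by
      intro i; by_cases hci : c i = 0 <;> simp [hci]
    rw [Finset.prod_congr rfl (fun i _ => hcard i), Finset.prod_ite,
      Finset.prod_const_one, one_mul, Finset.prod_const]
    have hfc4 : (Finset.univ.filter fun i => ¬ c i = 0).card = 4 := by
      have h := hc4
      rw [hammingWt] at h
      exact h
    rw [hfc4]
    norm_num
  have hB : (S.filter fun z => ¬ P z).card = 16 * Wf.card := by
    rw [hBcard, Finset.sum_congr rfl hfibc, Finset.sum_const, smul_eq_mul]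
    ring
  constructor
  · rw [hset]; exact (S.image f).finite_toSet
  · rw [hset, hWset, Set.ncard_coe_finset, Set.ncard_coe_finset,
      Finset.card_image_of_injective _ hfinj, ← hsplit, hA, hB]
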